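/- Let m be a positive integer and R a commutative ring in which the image of m is invertible. Then the quotient R-algebra R[X]/(Φ_m) is formally étale over R. -/

import Mathlib

open Polynomial

/-- If the derivative of `f` is invertible in `AdjoinRoot f`, then `AdjoinRoot f` is
formally étale over `R`. -/
theorem adjoinRoot_formallyEtale_of_isUnit_derivative {R : Type*} [CommRing R] (f : R[X])
    (hf : IsUnit (aeval (AdjoinRoot.root f) (derivative f))) :
    Algebra.FormallyEtale R (AdjoinRoot f) := by
  have hroot : aeval (AdjoinRoot.root f) f = 0 := by
    rw [AdjoinRoot.aeval_eq, AdjoinRoot.mk_self]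
  rw [Algebra.FormallyEtale.iff_comp_bijective]
  intro B _ _ I hI
  have key : ∀ (x : B) (ε : B), ε ∈ I →
      aeval (x + ε) f = aeval x f + aeval x (derivative f) * ε := fun x ε hε => by
    have hsq : ε ^ 2 = 0 := by
      rw [← Ideal.mem_bot, ← hI]; exact Ideal.pow_mem_pow hε 2
    rw [← eval_map_algebraMap, ← eval_map_algebraMap, ← eval_map_algebraMap,
      eval_add_of_sq_eq_zero _ _ _ hsq, derivative_map]
  constructor
  · -- injectivity
    intro g₁ g₂ hg
    have h1 : Ideal.Quotient.mk I (g₂ (AdjoinRoot.root f))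
        = Ideal.Quotient.mk I (g₁ (AdjoinRoot.root f)) := by
      have := congrFun (congrArg DFunLike.coe hg) (AdjoinRoot.root f)
      exact this.symm
    have hε : g₂ (AdjoinRoot.root f) - g₁ (AdjoinRoot.root f) ∈ I := by
      rw [← Ideal.Quotient.eq_zero_iff_mem, map_sub, sub_eq_zero, h1]
    have h2 : aeval (g₁ (AdjoinRoot.root f)
        + (g₂ (AdjoinRoot.root f) - g₁ (AdjoinRoot.root f))) f = 0 := by
      rw [add_sub_cancel, aeval_algHom_apply, hroot, map_zero]
    rw [key _ _ hε] at h2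
    simp only [aeval_algHom_apply, hroot, map_zero, zero_add] at h2
    have h3 := (hf.map g₁).mul_right_eq_zero.mp h2
    exact AdjoinRoot.algHom_ext (sub_eq_zero.mp h3).symm
  · -- surjectivity
    intro φ
    obtain ⟨x, hx⟩ := Ideal.Quotient.mk_surjective (φ (AdjoinRoot.root f))
    have hmk : ∀ b : B, Ideal.Quotient.mkₐ R I b = Ideal.Quotient.mk I b := fun _ => rfl
    have hx' : Ideal.Quotient.mk I (aeval x f) = 0 := by
      rw [← hmk, ← aeval_algHom_apply, hmk, hx, aeval_algHom_apply, hroot, map_zero]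
    have hu' : IsUnit (Ideal.Quotient.mk I (aeval x (derivative f))) := by
      have h4 := hf.map φ
      rw [← aeval_algHom_apply, ← hx, ← hmk, aeval_algHom_apply, hmk] at h4
      exact h4
    obtain ⟨u, hu⟩ := Ideal.Quotient.mk_surjective (↑hu'.unit⁻¹ : B ⧸ I)
    have hmem : u * aeval x f ∈ I := by
      rw [← Ideal.Quotient.eq_zero_iff_mem, map_mul, hx', mul_zero]
    have hy : aeval (x + (-(u * aeval x f))) f = 0 := by
      rw [key _ _ (neg_mem hmem)]
      have heq : aeval x f + aeval x (derivative f) * -(u * aeval x f)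
          = (1 - aeval x (derivative f) * u) * aeval x f := by ring
      rw [heq, ← Ideal.mem_bot, ← hI, pow_two]
      refine Ideal.mul_mem_mul ?_ (Ideal.Quotient.eq_zero_iff_mem.mp hx')
      rw [← Ideal.Quotient.eq_zero_iff_mem, map_sub, map_one, map_mul, hu,
        IsUnit.mul_val_inv, sub_self]
    refine ⟨AdjoinRoot.liftAlgHom f (Algebra.ofId R B) _ (show eval₂ ((Algebra.ofId R B : R →ₐ[R] B) : R →+* B) (x + (-(u * aeval x f))) f = 0 from hy), AdjoinRoot.algHom_ext ?_⟩
    rw [AlgHom.comp_apply, AdjoinRoot.liftAlgHom_root, hmk, map_add, map_neg, map_mul, hx',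
      mul_zero, neg_zero, add_zero, hx]

/-- If `m` is invertible in a commutative ring `R`, the cyclotomic extension `R[X]/(Φ_m)` is
formally étale over `R`. -/
theorem cyclotomic_extension_formallyEtale
    {R : Type*} [CommRing R] (m : ℕ) (hm : 0 < m) (hu : IsUnit (m : R)) :
    Algebra.FormallyEtale R (Polynomial R ⧸ Ideal.span {Polynomial.cyclotomic m R}) := by
  apply adjoinRoot_formallyEtale_of_isUnit_derivative (cyclotomic m R)
  set x := AdjoinRoot.root (cyclotomic m R) with hxdef
  obtain ⟨g, hg⟩ : cyclotomic m R ∣ X ^ m - 1 := by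
    rw [← prod_cyclotomic_eq_X_pow_sub_one hm R]
    exact Finset.dvd_prod_of_mem _ (Nat.mem_divisors_self m hm.ne')
  have hx0 : aeval x (cyclotomic m R) = 0 := by
    rw [hxdef, AdjoinRoot.aeval_eq, AdjoinRoot.mk_self]
  have hxm : x ^ m = 1 := by
    have h5 := congrArg (aeval x) hg
    rw [map_sub, map_mul, hx0, zero_mul, map_pow, aeval_X, map_one, sub_eq_zero] at h5
    exact h5
  have hxu : IsUnit x := IsUnit.of_mul_eq_one (a := x) (x ^ (m - 1)) (by
    rw [← pow_succ', Nat.sub_add_cancel hm, hxm])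
  have hder : aeval x (derivative (cyclotomic m R)) * aeval x g
      = (m : AdjoinRoot (cyclotomic m R)) * x ^ (m - 1) := by
    have h6 := congrArg (fun p => aeval x (derivative p)) hg
    simp only [derivative_sub, derivative_one, derivative_X_pow, derivative_mul, sub_zero,
      map_add, map_mul, map_pow, aeval_X, aeval_C, hx0, mul_zero, zero_mul, add_zero,
      zero_add, map_natCast] at h6
    rw [← h6]
  have hru : IsUnit ((m : AdjoinRoot (cyclotomic m R)) * x ^ (m - 1)) := by
    refine IsUnit.mul ?_ (hxu.pow _)
    have h7 : ((m : R) : AdjoinRoot (cyclotomic m R)) = (m : AdjoinRoot (cyclotomic m R)) := by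
      rfl
    rw [← h7]
    exact hu.map (algebraMap R _)
  rw [← hder] at hru
  exact isUnit_of_mul_isUnit_left hru
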